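/- For integers a > b > 0 and c = a - b + 1, the following identity of Schur polynomials in three variables holds: s_{(c,c,0)} · s_{(a+1,a+1,1)} = s_{(a+1,b,1)} · s_{(c,c,c)} + s_{(a+1,a+1,0)} · s_{(c,c,1)}. -/

import Mathlib

open MvPolynomial

/-- Complete homogeneous symmetric polynomial in `n` variables, indexed by an
integer, with the convention `h_k = 0` for `k < 0` and `h_0 = 1`. -/
noncomputable def hInt (n : ℕ) (k : ℤ) : MvPolynomial (Fin n) ℤ :=
  if 0 ≤ k then hsymm (Fin n) ℤ k.toNat else 0

/-- The Schur polynomial of `α` in `n` variables, defined via the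
Jacobi–Trudi determinant `s_α = det (h_{α_i - i + j})_{i,j}`. -/
noncomputable def schur (n : ℕ) (α : Fin n → ℕ) : MvPolynomial (Fin n) ℤ :=
  Matrix.det (Matrix.of fun i j : Fin n => hInt n ((α i : ℤ) - (i : ℕ) + (j : ℕ)))

/-- A symmetric polynomial is Schur positive if it is a nonnegative integer
combination of Schur polynomials of partitions. -/
def SchurPositive (n : ℕ) (f : MvPolynomial (Fin n) ℤ) : Prop :=
  ∃ c : (Fin n → ℕ) →₀ ℕ, (∀ lam ∈ c.support, Antitone lam) ∧
    f = c.sum fun lam k => (k : ℤ) • schur n lam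

/-! ### Auxiliary lemmas -/

lemma SIF2T.exists_map_succ (n : ℕ) (m : Multiset (Fin (n+1))) (h : ∀ x ∈ m, x ≠ 0) :
    ∃ m' : Multiset (Fin n), m'.map Fin.succ = m := by
  induction m using Multiset.induction with
  | empty => exact ⟨0, rfl⟩
  | cons a s ih =>
    obtain ⟨m', hm'⟩ := ih (fun x hx => h x (Multiset.mem_cons_of_mem hx))
    exact ⟨a.pred (h a (Multiset.mem_cons_self a s)) ::ₘ m', by simp [hm']⟩

lemma SIF2T.hsymm_split (n k : ℕ) :
    hsymm (Fin (n+1)) ℤ (k+1)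
      = X 0 * hsymm (Fin (n+1)) ℤ k + rename Fin.succ (hsymm (Fin n) ℤ (k+1)) := by
  classical
  rw [hsymm, hsymm, hsymm, Finset.mul_sum, map_sum]
  rw [← Finset.sum_filter_add_sum_filter_not Finset.univ
      (fun s : Sym (Fin (n+1)) (k+1) => (0 : Fin (n+1)) ∈ s)]
  congr 1
  · symm
    refine Finset.sum_bij (fun (s : Sym (Fin (n+1)) k) _ => (0 : Fin (n+1)) ::ₛ s)
      ?_ ?_ ?_ ?_
    · intro s _
      simp [Sym.mem_cons]
    · intro s _ t _ h
      exact (Sym.cons_inj_right _ _ _).mp h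
    · intro t ht
      exact ⟨t.erase 0 (Finset.mem_filter.mp ht).2, Finset.mem_univ _,
        Sym.cons_erase _⟩
    · intro s _
      simp [Sym.coe_cons, Multiset.map_cons, Multiset.prod_cons]
  · symm
    refine Finset.sum_bij (fun (s : Sym (Fin n) (k+1)) _ => s.map Fin.succ)
      ?_ ?_ ?_ ?_
    · intro s _
      simp only [Finset.mem_filter, Finset.mem_univ, true_and, Sym.mem_map]
      rintro ⟨x, -, hx⟩
      exact Fin.succ_ne_zero x hx
    · intro s _ t _ h
      exact Sym.map_injective (Fin.succ_injective n) _ h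
    · intro t ht
      have h0 : ∀ x ∈ t.1, x ≠ (0 : Fin (n+1)) := by
        intro x hx hx0
        subst hx0
        exact (Finset.mem_filter.mp ht).2 hx
      obtain ⟨m', hm'⟩ := SIF2T.exists_map_succ n t.1 h0
      have hcard : Multiset.card m' = k + 1 := by
        have := congrArg Multiset.card hm'
        simpa [t.2] using this
      refine ⟨Sym.mk m' hcard, Finset.mem_univ _, ?_⟩
      exact Sym.coe_injective (by rw [Sym.coe_map]; exact hm')
    · intro s _
      obtain ⟨m, hm⟩ := s
      rw [map_multiset_prod]
      simp [Sym.map, Multiset.map_map, Function.comp]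

lemma SIF2T.hsymm_fin_one (k : ℕ) : hsymm (Fin 1) ℤ k = X 0 ^ k := by
  have hval : ∀ s : Sym (Fin 1) k, Subtype.val s = Multiset.replicate k (0 : Fin 1) := by
    intro s
    rw [Multiset.eq_replicate]
    exact ⟨s.2, fun x _ => Subsingleton.elim x 0⟩
  rw [hsymm]
  have : ∀ s : Sym (Fin 1) k,
      (Multiset.map (X (R := ℤ)) (Subtype.val s)).prod = X 0 ^ k := by
    intro s
    rw [hval s, Multiset.map_replicate, Multiset.prod_replicate]
  rw [Finset.sum_congr rfl (fun s _ => this s), Finset.sum_const]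
  have hcard : Finset.univ.card = Fintype.card (Sym (Fin 1) k) := rfl
  haveI : Unique (Sym (Fin 1) k) :=
    ⟨⟨⟨Multiset.replicate k 0, by simp⟩⟩, fun s => Subtype.ext (hval s)⟩
  rw [hcard, Fintype.card_unique, one_smul]

noncomputable def SIF2T.E1 : MvPolynomial (Fin 3) ℤ := X 0 + X 1 + X 2
noncomputable def SIF2T.E2 : MvPolynomial (Fin 3) ℤ := X 0 * X 1 + X 0 * X 2 + X 1 * X 2
noncomputable def SIF2T.E3 : MvPolynomial (Fin 3) ℤ := X 0 * X 1 * X 2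

namespace SIF2T

noncomputable def B (k : ℕ) : MvPolynomial (Fin 3) ℤ :=
  rename Fin.succ (hsymm (Fin 2) ℤ k)

lemma L1 (k : ℕ) : hsymm (Fin 3) ℤ (k+1) = X 0 * hsymm (Fin 3) ℤ k + B (k+1) :=
  hsymm_split 2 k

lemma L2 (k : ℕ) : B (k+1) = X 1 * B k + X 2 ^ (k+1) := by
  unfold B
  rw [hsymm_split 1 k]
  rw [map_add, map_mul, rename_X, rename_rename, hsymm_fin_one, map_pow, rename_X]
  rw [show (Fin.succ (0 : Fin 2) : Fin 3) = 1 from rfl,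
      show ((Fin.succ ∘ Fin.succ) (0 : Fin 1) : Fin 3) = 2 from rfl]

lemma hsymm_rec (k : ℕ) : hsymm (Fin 3) ℤ (k+3)
    = E1 * hsymm (Fin 3) ℤ (k+2) - E2 * hsymm (Fin 3) ℤ (k+1) + E3 * hsymm (Fin 3) ℤ k := by
  have l3 : hsymm (Fin 3) ℤ (k+3) = X 0 * hsymm (Fin 3) ℤ (k+2) + B (k+3) := L1 (k+2)
  have l2 : hsymm (Fin 3) ℤ (k+2) = X 0 * hsymm (Fin 3) ℤ (k+1) + B (k+2) := L1 (k+1)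
  have l1 : hsymm (Fin 3) ℤ (k+1) = X 0 * hsymm (Fin 3) ℤ k + B (k+1) := L1 k
  have b3 : B (k+3) = X 1 * B (k+2) + X 2 ^ (k+3) := L2 (k+2)
  have b2 : B (k+2) = X 1 * B (k+1) + X 2 ^ (k+2) := L2 (k+1)
  rw [l3, l2, l1, b3, b2]
  unfold E1 E2 E3
  ring

lemma B1eq : rename Fin.succ (hsymm (Fin 2) ℤ 1) = (X 1 + X 2 : MvPolynomial (Fin 3) ℤ) := by
  rw [hsymm_one, Fin.sum_univ_two, map_add, rename_X, rename_X]
  rw [show (Fin.succ (0 : Fin 2) : Fin 3) = 1 from rfl,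
      show (Fin.succ (1 : Fin 2) : Fin 3) = 2 from rfl]

lemma hsymm_one' : hsymm (Fin 3) ℤ 1 = E1 := by
  rw [hsymm_one, Fin.sum_univ_three]; rfl

lemma hsymm_two : hsymm (Fin 3) ℤ 2 = E1 * hsymm (Fin 3) ℤ 1 - E2 := by
  have l := L1 1
  have b2 := L2 1
  rw [show (1+1) = 2 from rfl] at l b2
  rw [show B 1 = rename Fin.succ (hsymm (Fin 2) ℤ 1) from rfl, B1eq] at b2
  rw [l, b2, hsymm_one']
  unfold E1 E2
  ring

noncomputable def H (k : ℤ) : MvPolynomial (Fin 3) ℤ := hInt 3 k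

lemma hInt_natCast (m : ℕ) : H (m : ℤ) = hsymm (Fin 3) ℤ m := by simp [H, hInt]

lemma hInt_rec (k : ℤ) (hk : -2 ≤ k) : H (k+3)
    = E1 * H (k+2) - E2 * H (k+1) + E3 * H k := by
  have h3 : k = -2 ∨ k = -1 ∨ 0 ≤ k := by omega
  rcases h3 with rfl | rfl | h
  · rw [show (-2+3 : ℤ) = ((1:ℕ):ℤ) by norm_num, show (-2+2 : ℤ) = ((0:ℕ):ℤ) by norm_num,
       show (-2+1 : ℤ) = (-1 : ℤ) by norm_num, hInt_natCast, hInt_natCast]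
    rw [show H (-1) = 0 by norm_num [H, hInt], show H (-2) = 0 by norm_num [H, hInt]]
    rw [hsymm_one', hsymm_zero]
    ring
  · rw [show (-1+3 : ℤ) = ((2:ℕ):ℤ) by norm_num, show (-1+2 : ℤ) = ((1:ℕ):ℤ) by norm_num,
       show (-1+1 : ℤ) = ((0:ℕ):ℤ) by norm_num, hInt_natCast, hInt_natCast, hInt_natCast]
    rw [show H (-1) = 0 by norm_num [H, hInt]]
    rw [hsymm_two, hsymm_zero]
    ring
  · obtain ⟨m, rfl⟩ := Int.eq_ofNat_of_zero_le h
    rw [show ((m:ℤ)+3) = ((m+3 : ℕ) : ℤ) by push_cast; ring,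
        show ((m:ℤ)+2) = ((m+2 : ℕ) : ℤ) by push_cast; ring,
        show ((m:ℤ)+1) = ((m+1 : ℕ) : ℤ) by push_cast; ring,
        hInt_natCast, hInt_natCast, hInt_natCast, hInt_natCast]
    exact hsymm_rec m

noncomputable def br (r s t : ℤ) : MvPolynomial (Fin 3) ℤ :=
    H r * (H (s+1) * H (t+2) - H (s+2) * H (t+1))
  - H (r+1) * (H s * H (t+2) - H (s+2) * H t)
  + H (r+2) * (H s * H (t+1) - H (s+1) * H t)

lemma br_cyc (r s t : ℤ) : br r s t = br s t r := by unfold br; ring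

lemma br_rep1 (r t : ℤ) : br r r t = 0 := by unfold br; ring
lemma br_rep2 (r s : ℤ) : br r s s = 0 := by unfold br; ring
lemma br_rep3 (r s : ℤ) : br r s r = 0 := by unfold br; ring
lemma br_swap23 (r s t : ℤ) : br r s t = - br r t s := by unfold br; ring

lemma br_GP (p q r s t u : ℤ) :
    br p q r * br s t u =
      br p q s * br r t u - br p q t * br r s u + br p q u * br r s t := by
  unfold br; ring

lemma br_shift (r s t : ℤ) (hr : -2 ≤ r) (hs : -2 ≤ s) (ht : -2 ≤ t) :
    br (r+1) (s+1) (t+1) = E3 * br r s t := by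
  unfold br
  rw [show (r+1+2 : ℤ) = r+3 by ring, show (s+1+2 : ℤ) = s+3 by ring,
      show (t+1+2 : ℤ) = t+3 by ring,
      hInt_rec r hr, hInt_rec s hs, hInt_rec t ht]
  ring

lemma Hrec4 (t : ℤ) (ht : -2 ≤ t) :
    H (t+4) = E1 * H (t+3) - E2 * H (t+2) + E3 * H (t+1) := by
  have h := hInt_rec (t+1) (by omega)
  rw [show (t+1+3 : ℤ) = t+4 by ring, show (t+1+2 : ℤ) = t+3 by ring,
      show (t+1+1 : ℤ) = t+2 by ring] at h
  exact h

lemma Hrec5 (t : ℤ) (ht : -2 ≤ t) :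
    H (t+5) = E1 * H (t+4) - E2 * H (t+3) + E3 * H (t+2) := by
  have h := hInt_rec (t+2) (by omega)
  rw [show (t+2+3 : ℤ) = t+5 by ring, show (t+2+2 : ℤ) = t+4 by ring,
      show (t+2+1 : ℤ) = t+3 by ring] at h
  exact h

lemma br_rec3 (r s t : ℤ) (ht : -2 ≤ t) :
    br r s (t+3) = E1 * br r s (t+2) - E2 * br r s (t+1) + E3 * br r s t := by
  unfold br
  rw [show (t+3+1 : ℤ) = t+4 by ring, show (t+3+2 : ℤ) = t+5 by ring,
      show (t+2+1 : ℤ) = t+3 by ring, show (t+2+2 : ℤ) = t+4 by ring,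
      show (t+1+1 : ℤ) = t+2 by ring, show (t+1+2 : ℤ) = t+3 by ring]
  rw [Hrec5 t ht, Hrec4 t ht, hInt_rec t ht]
  ring

lemma br_rec2 (r s t : ℤ) (hs : -2 ≤ s) :
    br r (s+3) t = E1 * br r (s+2) t - E2 * br r (s+1) t + E3 * br r s t := by
  unfold br
  rw [show (s+3+1 : ℤ) = s+4 by ring, show (s+3+2 : ℤ) = s+5 by ring,
      show (s+2+1 : ℤ) = s+3 by ring, show (s+2+2 : ℤ) = s+4 by ring,
      show (s+1+1 : ℤ) = s+2 by ring, show (s+1+2 : ℤ) = s+3 by ring]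
  rw [Hrec5 s hs, Hrec4 s hs, hInt_rec s hs]
  ring

lemma br_shift_iter (n : ℕ) (r s t : ℤ) (hr : -2 ≤ r) (hs : -2 ≤ s) (ht : -2 ≤ t) :
    br (r+n) (s+n) (t+n) = E3 ^ n * br r s t := by
  induction n with
  | zero => simp
  | succ m ih =>
    rw [show (r + (m+1 : ℕ) : ℤ) = (r+m)+1 by push_cast; ring,
        show (s + (m+1 : ℕ) : ℤ) = (s+m)+1 by push_cast; ring,
        show (t + (m+1 : ℕ) : ℤ) = (t+m)+1 by push_cast; ring,
        br_shift _ _ _ (by omega) (by omega) (by omega), ih]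
    rw [pow_succ]
    ring

lemma H0 : H 0 = 1 := by
  rw [H, hInt]
  norm_num [hsymm_zero]

lemma Hneg1 : H (-1) = 0 := by rw [H, hInt]; norm_num

lemma Hneg2 : H (-2) = 0 := by rw [H, hInt]; norm_num

lemma br_h (k : ℤ) : br k (-1) (-2) = H k := by
  unfold br
  norm_num [H0, Hneg1, Hneg2]

lemma br_base : br 0 (-1) (-2) = 1 := by rw [br_h, H0]

lemma ev210 : br 2 1 0 = E3 ^ 2 := by
  have h := br_shift_iter 2 0 (-1) (-2) (by norm_num) (by norm_num) (by norm_num)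
  rw [br_base, show ((0:ℤ) + (2:ℕ)) = 2 by norm_num, show ((-1:ℤ) + (2:ℕ)) = 1 by norm_num,
      show ((-2:ℤ) + (2:ℕ)) = 0 by norm_num, mul_one] at h
  exact h

lemma ev102 : br 1 0 2 = E3 ^ 2 := by
  rw [br_cyc, br_cyc, ev210]

lemma evA10 (A : ℤ) (hA : 0 ≤ A) : br (A+2) 1 0 = E3 ^ 2 * H A := by
  have h := br_shift_iter 2 A (-1) (-2) (by omega) (by norm_num) (by norm_num)
  rw [br_h, show ((-1:ℤ) + (2:ℕ)) = 1 by norm_num,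
      show ((-2:ℤ) + (2:ℕ)) = 0 by norm_num, show ((A:ℤ) + (2:ℕ)) = A + 2 by norm_num] at h
  exact h

lemma evA0m1 (A : ℤ) (hA : 0 ≤ A) : br (A+2) 0 (-1) = E3 * H (A+1) := by
  have h := br_shift (A+1) (-1) (-2) (by omega) (by norm_num) (by norm_num)
  rw [br_h, show (A+1+1 : ℤ) = A+2 by ring, show ((-1:ℤ)+1) = 0 by norm_num,
      show ((-2:ℤ)+1) = -1 by norm_num] at h
  exact h

lemma ev103 : br 1 0 3 = E1 * E3 ^ 2 := by
  have h := br_rec3 1 0 0 (by norm_num)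
  rw [show ((0:ℤ)+3) = 3 by norm_num, show ((0:ℤ)+2) = 2 by norm_num,
      show ((0:ℤ)+1) = 1 by norm_num, ev102, br_rep3, br_rep2] at h
  rw [h]; ring

lemma evA20 (A : ℤ) (hA : 0 ≤ A) :
    br (A+2) 2 0 = E1 * (E3 ^ 2 * H A) - E3 * (E3 * H (A+1)) := by
  have h := br_rec2 (A+2) (-1) 0 (by norm_num)
  rw [show ((-1:ℤ)+3) = 2 by norm_num, show ((-1:ℤ)+2) = 1 by norm_num,
      show ((-1:ℤ)+1) = 0 by norm_num, evA10 A hA, br_rep2] at h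
  have h2 : br (A+2) (-1) 0 = - (E3 * H (A+1)) := by
    rw [br_swap23, evA0m1 A hA]
  rw [h2] at h
  rw [h]; ring

lemma dagger (b a : ℕ) :
    br 1 0 ((b:ℤ)+1) * H (a:ℤ) - br 1 0 (b:ℤ) * H ((a:ℤ)+1) = br ((a:ℤ)+2) (b:ℤ) 0 := by
  induction b using Nat.strong_induction_on with
  | _ b IH =>
    match b with
    | 0 =>
      norm_num [br_rep3, br_rep2]
    | 1 =>
      have e1 : ((1:ℕ):ℤ) = 1 := by norm_num
      rw [e1, show ((1:ℤ)+1) = 2 by norm_num, ev102, br_rep3,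
          evA10 (a:ℤ) (by positivity)]
      ring
    | 2 =>
      have e1 : ((2:ℕ):ℤ) = 2 := by norm_num
      rw [e1, show ((2:ℤ)+1) = 3 by norm_num, ev103, ev102,
          evA20 (a:ℤ) (by positivity)]
      ring
    | (n+3) =>
      have IH0 := IH n (by omega)
      have IH1 := IH (n+1) (by omega)
      have IH2 := IH (n+2) (by omega)
      push_cast at IH0 IH1 IH2 ⊢
      rw [show ((n:ℤ)+1+1) = (n:ℤ)+2 by ring] at IH1
      rw [show ((n:ℤ)+2+1) = (n:ℤ)+3 by ring] at IH2
      have r4 : br 1 0 ((n:ℤ)+4) = E1 * br 1 0 ((n:ℤ)+3) - E2 * br 1 0 ((n:ℤ)+2)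
          + E3 * br 1 0 ((n:ℤ)+1) := by
        have h := br_rec3 1 0 ((n:ℤ)+1) (by omega)
        rw [show ((n:ℤ)+1+3) = (n:ℤ)+4 by ring, show ((n:ℤ)+1+2) = (n:ℤ)+3 by ring,
            show ((n:ℤ)+1+1) = (n:ℤ)+2 by ring] at h
        exact h
      have r3 : br 1 0 ((n:ℤ)+3) = E1 * br 1 0 ((n:ℤ)+2) - E2 * br 1 0 ((n:ℤ)+1)
          + E3 * br 1 0 (n:ℤ) := br_rec3 1 0 (n:ℤ) (by omega)
      have r2 : br ((a:ℤ)+2) ((n:ℤ)+3) 0 = E1 * br ((a:ℤ)+2) ((n:ℤ)+2) 0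
          - E2 * br ((a:ℤ)+2) ((n:ℤ)+1) 0 + E3 * br ((a:ℤ)+2) (n:ℤ) 0 :=
        br_rec2 ((a:ℤ)+2) (n:ℤ) 0 (by omega)
      rw [show ((n:ℤ)+3+1) = (n:ℤ)+4 by ring]
      linear_combination H (a:ℤ) * r4 - H ((a:ℤ)+1) * r3 - r2
        + E1 * IH2 - E2 * IH1 + E3 * IH0

lemma schur_eq (x y z : ℕ) :
    schur 3 ![x, y, z] = br (x:ℤ) ((y:ℤ)-1) ((z:ℤ)-2) := by
  unfold schur br H
  rw [Matrix.det_fin_three]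
  simp only [Matrix.of_apply, Matrix.cons_val', Matrix.cons_val_zero, Matrix.cons_val_one,
    Matrix.head_cons, Matrix.head_fin_const, Matrix.cons_val_fin_one, Matrix.cons_val_two,
    Matrix.tail_cons, Fin.val_zero, Fin.val_one, Fin.val_two]
  norm_num
  ring_nf

lemma br_congr {r s t r' s' t' : ℤ} (h1 : r = r') (h2 : s = s') (h3 : t = t') :
    br r s t = br r' s' t' := by rw [h1, h2, h3]

lemma br10m1 : br 1 0 (-1) = E3 := by
  have h := br_shift 0 (-1) (-2) (by norm_num) (by norm_num) (by norm_num)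
  rw [br_base, mul_one, show ((0:ℤ)+1) = 1 by norm_num, show ((-1:ℤ)+1) = 0 by norm_num,
      show ((-2:ℤ)+1) = -1 by norm_num] at h
  exact h

end SIF2T

open SIF2T in
/-- For `a > b > 0` and `c = a - b + 1`:
`s_{(c,c,0)} s_{(a+1,a+1,1)} = s_{(a+1,b,1)} s_{(c,c,c)} + s_{(a+1,a+1,0)} s_{(c,c,1)}`. -/
theorem schur_identity_family2_third (a b : ℕ) (hab : b < a) (hb : 0 < b) :
    schur 3 ![a - b + 1, a - b + 1, 0] * schur 3 ![a + 1, a + 1, 1] =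
      schur 3 ![a + 1, b, 1] * schur 3 ![a - b + 1, a - b + 1, a - b + 1] +
      schur 3 ![a + 1, a + 1, 0] * schur 3 ![a - b + 1, a - b + 1, 1] := by
  rw [schur_eq (a-b+1) (a-b+1) 0, schur_eq (a+1) (a+1) 1, schur_eq (a+1) b 1,
      schur_eq (a-b+1) (a-b+1) (a-b+1), schur_eq (a+1) (a+1) 0, schur_eq (a-b+1) (a-b+1) 1]
  rw [br_congr (show ((↑(a-b+1):ℤ)) = ↑a-↑b+1 by omega)
        (show ((↑(a-b+1):ℤ))-1 = ↑a-↑b by omega) (show (((0:ℕ):ℤ))-2 = -2 by norm_num),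
      br_congr (show ((↑(a+1):ℤ)) = ↑a+1 by omega)
        (show ((↑(a+1):ℤ))-1 = ↑a by omega) (show (((1:ℕ):ℤ))-2 = -1 by norm_num),
      br_congr (show ((↑(a+1):ℤ)) = ↑a+1 by omega)
        (show ((↑b:ℤ))-1 = ↑b-1 by omega) (show (((1:ℕ):ℤ))-2 = -1 by norm_num),
      br_congr (show ((↑(a-b+1):ℤ)) = ↑a-↑b+1 by omega)
        (show ((↑(a-b+1):ℤ))-1 = ↑a-↑b by omega) (show ((↑(a-b+1):ℤ))-2 = ↑a-↑b-1 by omega),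
      br_congr (show ((↑(a+1):ℤ)) = ↑a+1 by omega)
        (show ((↑(a+1):ℤ))-1 = ↑a by omega) (show (((0:ℕ):ℤ))-2 = -2 by norm_num),
      br_congr (show ((↑(a-b+1):ℤ)) = ↑a-↑b+1 by omega)
        (show ((↑(a-b+1):ℤ))-1 = ↑a-↑b by omega) (show (((1:ℕ):ℤ))-2 = -1 by norm_num)]
  have hGP := br_GP ((a:ℤ)-↑b+1) ((a:ℤ)-↑b) (-2) ((a:ℤ)+1) (a:ℤ) (-1)
  have e2 : br (-2) (a:ℤ) (-1) = H (a:ℤ) := by rw [br_cyc]; exact br_h _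
  have e3' : br (-2) ((a:ℤ)+1) (-1) = H ((a:ℤ)+1) := by rw [br_cyc]; exact br_h _
  have e1' : br (-2) ((a:ℤ)+1) (a:ℤ) = br ((a:ℤ)+1) (a:ℤ) (-2) := br_cyc _ _ _
  have s1 : br ((a:ℤ)-↑b+1) ((a:ℤ)-↑b) ((a:ℤ)+1) = E3 ^ (a-b) * br 1 0 ((b:ℤ)+1) := by
    have h := br_shift_iter (a-b) 1 0 ((b:ℤ)+1) (by norm_num) (by norm_num) (by omega)
    rw [show ((1:ℤ)+((a-b:ℕ):ℤ)) = ↑a-↑b+1 by omega,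
        show ((0:ℤ)+((a-b:ℕ):ℤ)) = ↑a-↑b by omega,
        show (((b:ℤ)+1)+((a-b:ℕ):ℤ)) = ↑a+1 by omega] at h
    exact h
  have s2 : br ((a:ℤ)-↑b+1) ((a:ℤ)-↑b) (a:ℤ) = E3 ^ (a-b) * br 1 0 (b:ℤ) := by
    have h := br_shift_iter (a-b) 1 0 (b:ℤ) (by norm_num) (by norm_num) (by omega)
    rw [show ((1:ℤ)+((a-b:ℕ):ℤ)) = ↑a-↑b+1 by omega,
        show ((0:ℤ)+((a-b:ℕ):ℤ)) = ↑a-↑b by omega,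
        show ((b:ℤ)+((a-b:ℕ):ℤ)) = (a:ℤ) by omega] at h
    exact h
  have s3 : br ((a:ℤ)-↑b+1) ((a:ℤ)-↑b) ((a:ℤ)-↑b-1) = E3 ^ (a-b) * br 1 0 (-1) := by
    have h := br_shift_iter (a-b) 1 0 (-1) (by norm_num) (by norm_num) (by norm_num)
    rw [show ((1:ℤ)+((a-b:ℕ):ℤ)) = ↑a-↑b+1 by omega,
        show ((0:ℤ)+((a-b:ℕ):ℤ)) = ↑a-↑b by omega,
        show ((-1:ℤ)+((a-b:ℕ):ℤ)) = (a:ℤ)-↑b-1 by omega] at h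
    exact h
  have dag := dagger b a
  have dag2 : br ((a:ℤ)+2) (b:ℤ) 0 = E3 * br ((a:ℤ)+1) ((b:ℤ)-1) (-1) := by
    have h := br_shift ((a:ℤ)+1) ((b:ℤ)-1) (-1) (by omega) (by omega) (by norm_num)
    rw [show ((a:ℤ)+1+1) = ↑a+2 by ring, show ((b:ℤ)-1+1) = (b:ℤ) by ring,
        show ((-1:ℤ)+1) = 0 by norm_num] at h
    exact h
  have s3b : br 1 0 (-1) = E3 := br10m1
  linear_combination hGP + br ((a:ℤ)-↑b+1) ((a:ℤ)-↑b) (-1) * e1'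
    + br ((a:ℤ)-↑b+1) ((a:ℤ)-↑b) ((a:ℤ)+1) * e2
    - br ((a:ℤ)-↑b+1) ((a:ℤ)-↑b) (a:ℤ) * e3'
    + H (a:ℤ) * s1 - H ((a:ℤ)+1) * s2
    + E3 ^ (a-b) * dag + E3 ^ (a-b) * dag2
    - br ((a:ℤ)+1) ((b:ℤ)-1) (-1) * s3
    - br ((a:ℤ)+1) ((b:ℤ)-1) (-1) * E3 ^ (a-b) * s3b
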